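/- Let f : ℤ² → {contact elements} be a discrete channel surface with circular direction '+' such that for every n ∈ ℤ the subspace span{s⁻(m,n) : m ∈ ℤ} is 3-dimensional. Then the Lie cyclide congruence of f is unique: if (D⁺, D⁻) and (E⁺, E⁻) are two face-cyclide congruences for f that are both independent of m, then D⁺(m,n) = E⁺(m,n) and D⁻(m,n) = E⁻(m,n) for all faces (m,n). -/

import Mathlib

noncomputable section

/-- The Lie sphere geometric model: `ℝ^{4,2}`. -/
abbrev V6 : Type := Fin 6 → ℝ

/-- The symmetric bilinear form of signature `(4,2)` on `V6`. -/
def B (x y : V6) : ℝ :=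
  x 0 * y 0 + x 1 * y 1 + x 2 * y 2 + x 3 * y 3 - x 4 * y 4 - x 5 * y 5

/-- An oriented sphere: a 1-dimensional isotropic subspace. -/
def IsSphere (S : Submodule ℝ V6) : Prop :=
  Module.finrank ℝ S = 1 ∧ ∀ x ∈ S, B x x = 0

/-- A contact element: a 2-dimensional totally isotropic subspace. -/
def IsContact (W : Submodule ℝ V6) : Prop :=
  Module.finrank ℝ W = 2 ∧ ∀ x ∈ W, ∀ y ∈ W, B x y = 0

/-- A `(2,1)`-plane: 3-dim subspace on which the form is nondegenerate of signature `(2,1)`. -/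
def IsSig21 (D : Submodule ℝ V6) : Prop :=
  ∃ u v w : V6, D = Submodule.span ℝ {u, v, w} ∧
    B u u = 1 ∧ B v v = 1 ∧ B w w = -1 ∧ B u v = 0 ∧ B u w = 0 ∧ B v w = 0

/-- A Dupin cyclide: a pair of `(2,1)`-planes, the second the orthogonal complement of the first. -/
def IsDupin (D E : Submodule ℝ V6) : Prop :=
  IsSig21 D ∧ IsSig21 E ∧ ∀ x : V6, x ∈ E ↔ ∀ y ∈ D, B x y = 0

/-- Horizontal curvature sphere on the edge from `(m,n)` to `(m+1,n)`. -/
def sPlus (f : ℤ × ℤ → Submodule ℝ V6) (m n : ℤ) : Submodule ℝ V6 :=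
  f (m, n) ⊓ f (m + 1, n)

/-- Vertical curvature sphere on the edge from `(m,n)` to `(m,n+1)`. -/
def sMinus (f : ℤ × ℤ → Submodule ℝ V6) (m n : ℤ) : Submodule ℝ V6 :=
  f (m, n) ⊓ f (m, n + 1)

/-- A discrete Legendre map. -/
def IsLegendre (f : ℤ × ℤ → Submodule ℝ V6) : Prop :=
  (∀ p : ℤ × ℤ, IsContact (f p)) ∧
  (∀ m n : ℤ, Module.finrank ℝ (sPlus f m n) = 1) ∧
  (∀ m n : ℤ, Module.finrank ℝ (sMinus f m n) = 1)

/-- A face-cyclide congruence for `f`. -/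
def IsFaceCyclideCongruence (f D E : ℤ × ℤ → Submodule ℝ V6) : Prop :=
  ∀ m n : ℤ,
    IsDupin (D (m, n)) (E (m, n)) ∧
    sPlus f m n ≤ D (m, n) ∧ sPlus f m (n + 1) ≤ D (m, n) ∧
    sMinus f m n ≤ E (m, n) ∧ sMinus f (m + 1) n ≤ E (m, n)

/-- A discrete channel surface with circular direction `+`. -/
def IsChannelPlus (f : ℤ × ℤ → Submodule ℝ V6) : Prop :=
  IsLegendre f ∧
  ∃ D E : ℤ × ℤ → Submodule ℝ V6,
    IsFaceCyclideCongruence f D E ∧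
    ∀ m m' n : ℤ, D (m, n) = D (m', n) ∧ E (m, n) = E (m', n)

/-- The orthogonal complement of a point sphere complex `p`. -/
def pPerp (p : V6) : Submodule ℝ V6 where
  carrier := {x | B x p = 0}
  add_mem' := by
    intro a b ha hb
    simp only [Set.mem_setOf_eq, B, Pi.add_apply] at *
    linear_combination ha + hb
  zero_mem' := by simp [B]
  smul_mem' := by
    intro c x hx
    simp only [Set.mem_setOf_eq, B, Pi.smul_apply, smul_eq_mul] at *
    linear_combination c * hx

/-- The Lie cyclide congruence of a discrete channel surface (whose vertical
curvature spheres span 3-dimensional subspaces along each `+`-coordinate ribbon) is unique. -/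
def Bf : LinearMap.BilinForm ℝ V6 :=
  LinearMap.mk₂ ℝ B
    (by intro x x' y; simp only [B, Pi.add_apply]; ring)
    (by intro c x y; simp only [B, Pi.smul_apply, smul_eq_mul]; ring)
    (by intro x y y'; simp only [B, Pi.add_apply]; ring)
    (by intro c x y; simp only [B, Pi.smul_apply, smul_eq_mul]; ring)

@[simp] lemma Bf_apply (x y : V6) : Bf x y = B x y := rfl

lemma B_symm (x y : V6) : B x y = B y x := by unfold B; ring

lemma Bf_refl : Bf.IsRefl := by
  intro x y h; rw [Bf_apply, B_symm] at h; exact h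

lemma Bf_nondeg : Bf.Nondegenerate := by
  refine (LinearMap.IsRefl.nondegenerate_iff_separatingLeft Bf_refl).2 ?_
  intro x h
  funext i
  have h0 := h (Pi.single 0 1)
  have h1 := h (Pi.single 1 1)
  have h2 := h (Pi.single 2 1)
  have h3 := h (Pi.single 3 1)
  have h4 := h (Pi.single 4 1)
  have h5 := h (Pi.single 5 1)
  simp [B, Pi.single_apply] at h0 h1 h2 h3 h4 h5
  fin_cases i <;> simp_all

lemma sig21_finrank {D : Submodule ℝ V6} (h : IsSig21 D) : Module.finrank ℝ D = 3 := by
  obtain ⟨u, v, w, hD, huu, hvv, hww, huv, huw, hvw⟩ := h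
  have hli : LinearIndependent ℝ ![u, v, w] := by
    rw [Fintype.linearIndependent_iff]
    intro g hg
    have hg' : g 0 • u + g 1 • v + g 2 • w = 0 := by
      have := hg
      rwa [Fin.sum_univ_three] at this
    have e0 : Bf (g 0 • u + g 1 • v + g 2 • w) u = g 0 := by
      simp [B_symm v u ▸ huv, huu, B_symm w u ▸ huw]
    have e1 : Bf (g 0 • u + g 1 • v + g 2 • w) v = g 1 := by
      simp [huv, hvv, B_symm w v ▸ hvw]
    have e2 : Bf (g 0 • u + g 1 • v + g 2 • w) w = -(g 2) := by
      simp [huw, hvw, hww]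
    rw [hg'] at e0 e1 e2
    simp at e0 e1 e2
    intro i; fin_cases i <;> simp_all
  have hr : Set.range ![u, v, w] = {u, v, w} := by
    simp only [Matrix.range_cons, Matrix.range_empty, Set.union_empty]
    ext x; simp; tauto
  rw [hD, ← hr, finrank_span_eq_card hli]
  simp

lemma finrankV6 : Module.finrank ℝ V6 = 6 := by
  simp [Module.finrank_fintype_fun_eq_card]

lemma dupin_D_eq {D E : Submodule ℝ V6} (h : IsDupin D E) : D = Bf.orthogonal E := by
  obtain ⟨hD, hE, hperp⟩ := h
  have hle : D ≤ Bf.orthogonal E := by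
    intro y hy
    rw [LinearMap.BilinForm.mem_orthogonal_iff]
    intro x hx
    exact (hperp x).1 hx y hy
  apply Submodule.eq_of_le_of_finrank_eq hle
  rw [sig21_finrank hD,
    LinearMap.BilinForm.finrank_orthogonal Bf_nondeg, finrankV6, sig21_finrank hE]


theorem lie_cyclide_congruence_unique
    (f : ℤ × ℤ → Submodule ℝ V6) (hf : IsChannelPlus f)
    (hdim : ∀ n : ℤ, Module.finrank ℝ ↥(⨆ m : ℤ, sMinus f m n) = 3)
    (D E D' E' : ℤ × ℤ → Submodule ℝ V6)
    (hDE : IsFaceCyclideCongruence f D E)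
    (hDE' : IsFaceCyclideCongruence f D' E')
    (hconst : ∀ m m' n : ℤ, D (m, n) = D (m', n) ∧ E (m, n) = E (m', n))
    (hconst' : ∀ m m' n : ℤ, D' (m, n) = D' (m', n) ∧ E' (m, n) = E' (m', n)) :
    ∀ m n : ℤ, D (m, n) = D' (m, n) ∧ E (m, n) = E' (m, n) := by
  have hS : ∀ (Dc Ec : ℤ × ℤ → Submodule ℝ V6),
      IsFaceCyclideCongruence f Dc Ec →
      (∀ m m' n : ℤ, Dc (m, n) = Dc (m', n) ∧ Ec (m, n) = Ec (m', n)) →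
      ∀ m n : ℤ, Ec (m, n) = ⨆ m' : ℤ, sMinus f m' n := by
    intro Dc Ec hc hcst m n
    have hle : (⨆ m' : ℤ, sMinus f m' n) ≤ Ec (m, n) := by
      apply iSup_le; intro m'
      rw [(hcst m m' n).2]
      exact (hc m' n).2.2.2.1
    refine (Submodule.eq_of_le_of_finrank_eq hle ?_).symm
    rw [hdim n, sig21_finrank (hc m n).1.2.1]
  intro m n
  have hEE' : E (m, n) = E' (m, n) := by
    rw [hS D E hDE hconst m n, hS D' E' hDE' hconst' m n]
  refine ⟨?_, hEE'⟩
  rw [dupin_D_eq (hDE m n).1, dupin_D_eq (hDE' m n).1, hEE']
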